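/- Let B be a set of n−1 two-element subsets of [n] = {1,…,n} whose associated graph is a spanning tree of the complete graph K_n. Then B contains no broken circuit with respect to the lexicographic order on pairs — i.e., there is no cycle C of K_n such that C with its lexicographically smallest edge removed is contained in B — if and only if every j ∈ {2,…,n} is the larger element of exactly one member of B; equivalently, B = {{f(j), j} : j = 2,…,n} for some function f with 1 ≤ f(j) < j for all j. -/

import Mathlib

/-- The ordered pair `(min, max)` of the two endpoints of an edge of `K_n`. -/
def edgePair {n : ℕ} (z : Sym2 (Fin n)) : Fin n × Fin n :=
  Sym2.lift ⟨fun a b => (min a b, max a b), fun a b => by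
    simp [min_comm, max_comm]⟩ z

/-- Lexicographic (strict) order on pairs. -/
def lexLt {n : ℕ} (p q : Fin n × Fin n) : Prop :=
  p.1 < q.1 ∨ (p.1 = q.1 ∧ p.2 < q.2)

open SimpleGraph

lemma edgePair_mk {n : ℕ} {a b : Fin n} (h : a < b) : edgePair s(a, b) = (a, b) := by
  simp [edgePair, min_eq_left h.le, max_eq_right h.le]

lemma edgePair_mk' {n : ℕ} {a b : Fin n} (h : b < a) : edgePair s(a, b) = (b, a) := by
  simp [edgePair, min_eq_right h.le, max_eq_left h.le]

lemma triangle_cycle (n : ℕ) (a b j : Fin n) (hab : a < b) (hbj : b < j) :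
    ∃ w : (⊤ : SimpleGraph (Fin n)).Walk a a, w.IsCycle ∧
      w.edges = [s(a,b), s(b,j), s(j,a)] := by
  have haj : a < j := hab.trans hbj
  let w3 : (⊤ : SimpleGraph (Fin n)).Walk j a := Walk.cons (by simp [haj.ne']) Walk.nil
  let w2 : (⊤ : SimpleGraph (Fin n)).Walk b a := Walk.cons (by simp [hbj.ne]) w3
  let w1 : (⊤ : SimpleGraph (Fin n)).Walk a a := Walk.cons (by simp [hab.ne]) w2
  refine ⟨w1, ?_, by simp [w1, w2, w3]⟩
  constructor
  · constructor
    · rw [Walk.isTrail_def]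
      simp [w1, w2, w3, Sym2.eq, Sym2.rel_iff', hab.ne, hbj.ne, haj.ne, haj.ne', hab.ne', hbj.ne']
    · simp [w1]
  · simp [w1, w2, w3, hab.ne, hbj.ne, haj.ne, haj.ne', hab.ne', hbj.ne']

lemma exists_two_edges {V : Type*} [DecidableEq V] {G : SimpleGraph V} {v u : V} {w : G.Walk v v}
    (hc : w.IsCycle) (hu : u ∈ w.support) :
    ∃ x y, x ≠ y ∧ s(u, x) ∈ w.edges ∧ s(u, y) ∈ w.edges := by
  obtain ⟨c, hcyc, hmem⟩ : ∃ c : G.Walk u u, c.IsCycle ∧ ∀ z, z ∈ c.edges ↔ z ∈ w.edges :=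
    ⟨w.rotate u hu, hc.rotate hu, fun z => (w.rotate_edges u hu).mem_iff⟩
  have hlen : 3 ≤ c.length := hcyc.three_le_length
  obtain ⟨x, hadj, q, hq⟩ := Walk.not_nil_iff.mp hcyc.not_nil
  have hrevnn : ¬ c.reverse.Nil := by
    rw [Walk.nil_iff_length_eq, Walk.length_reverse]; omega
  obtain ⟨y, hadj', q', hq'⟩ := Walk.not_nil_iff.mp hrevnn
  have hce : c.edges = s(u, x) :: q.edges := by rw [hq]; simp
  have hcre : c.edges.reverse = s(u, y) :: q'.edges := by
    rw [← Walk.edges_reverse, hq']; simp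
  refine ⟨x, y, ?_, hmem _ |>.mp (by rw [hce]; exact List.mem_cons_self),
    hmem _ |>.mp (by rw [← List.mem_reverse, hcre]; exact List.mem_cons_self)⟩
  rintro rfl
  have hnd : c.edges.Nodup := hcyc.edges_nodup
  have h2 : c.edges = q'.edges.reverse ++ [s(u, x)] := by
    rw [← List.reverse_reverse c.edges, hcre]; simp
  rw [hce] at hnd h2
  have hx : s(u, x) ∉ q.edges := (List.nodup_cons.mp hnd).1
  rcases hr : q'.edges.reverse with _ | ⟨a, t⟩
  · rw [hr] at h2
    simp at h2
    have : c.length = 1 := by rw [hq]; simp [← Walk.length_edges, h2]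
    omega
  · rw [hr] at h2
    rw [List.cons_append] at h2
    obtain ⟨rfl, h3⟩ := List.cons_eq_cons.mp h2
    exact hx (h3 ▸ List.mem_append_right _ List.mem_cons_self)

theorem nbc_iff_larger_element_unique (n : ℕ) (B : Finset (Fin n × Fin n))
    (hpairs : ∀ e ∈ B, e.1 < e.2) (hcard : B.card = n - 1)
    (hconn : (SimpleGraph.fromEdgeSet {z : Sym2 (Fin n) | ∃ e ∈ B, z = s(e.1, e.2)}).Connected)
    (hacyc : (SimpleGraph.fromEdgeSet {z : Sym2 (Fin n) | ∃ e ∈ B, z = s(e.1, e.2)}).IsAcyclic) :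
    (¬ ∃ (v : Fin n) (w : (⊤ : SimpleGraph (Fin n)).Walk v v), w.IsCycle ∧
        ∃ e ∈ w.edges, (∀ e' ∈ w.edges, e' ≠ e → lexLt (edgePair e) (edgePair e')) ∧
          ∀ e' ∈ w.edges, e' ≠ e → edgePair e' ∈ B) ↔
    (∀ j : Fin n, j.val ≠ 0 → ∃! e, e ∈ B ∧ e.2 = j) := by
  constructor
  · intro hnbc
    -- injectivity of the "larger endpoint" map on B
    have hinj : ∀ e₁ ∈ B, ∀ e₂ ∈ B, e₁.2 = e₂.2 → e₁ = e₂ := by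
      intro e₁ h₁ e₂ h₂ h22
      by_contra hne
      have h11 : e₁.1 ≠ e₂.1 := fun h => hne (Prod.ext h h22)
      have H : ∀ a b j : Fin n, (a, j) ∈ B → (b, j) ∈ B → a < b → False := by
        intro a b j haB hbB hab
        have hbj : b < j := hpairs _ hbB
        obtain ⟨w, hw, hwe⟩ := triangle_cycle n a b j hab hbj
        apply hnbc
        refine ⟨a, w, hw, s(a, b), by rw [hwe]; simp, ?_, ?_⟩
        · intro e' he' hne'
          rw [hwe] at he'
          have haj : a < j := hab.trans hbj
          simp only [List.mem_cons, List.not_mem_nil, or_false] at he'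
          rcases he' with rfl | rfl | rfl
          · exact absurd rfl hne'
          · rw [edgePair_mk hab, edgePair_mk hbj]
            exact Or.inl hab
          · rw [edgePair_mk hab, edgePair_mk' haj]
            exact Or.inr ⟨rfl, hbj⟩
        · intro e' he' hne'
          rw [hwe] at he'
          have haj : a < j := hab.trans hbj
          simp only [List.mem_cons, List.not_mem_nil, or_false] at he'
          rcases he' with rfl | rfl | rfl
          · exact absurd rfl hne'
          · rw [edgePair_mk hbj]; exact hbB
          · rw [edgePair_mk' haj]; exact haB
      rcases lt_or_gt_of_ne h11 with h | h
      · exact H e₁.1 e₂.1 e₂.2 (by rw [← h22]; simpa using h₁) (by simpa using h₂) h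
      · exact H e₂.1 e₁.1 e₂.2 (by simpa using h₂) (by rw [← h22]; simpa using h₁) h
    have hn : 0 < n := by
      obtain ⟨i⟩ := hconn.nonempty
      exact i.pos
    have hsnd0 : ∀ e ∈ B, (e.2 : Fin n) ≠ ⟨0, hn⟩ := by
      intro e he h
      have := hpairs e he
      rw [h] at this
      exact absurd this (by simp [Fin.lt_def])
    have himg : B.image Prod.snd = Finset.univ.erase ⟨0, hn⟩ := by
      apply Finset.eq_of_subset_of_card_le
      · intro j hj
        obtain ⟨e, he, rfl⟩ := Finset.mem_image.mp hj
        exact Finset.mem_erase.mpr ⟨hsnd0 e he, Finset.mem_univ _⟩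
      · rw [Finset.card_erase_of_mem (Finset.mem_univ _),
          Finset.card_image_of_injOn (fun e he e' he' h => hinj e he e' he' h)]
        simp [hcard]
    intro j hj
    have hjmem : j ∈ B.image Prod.snd := by
      rw [himg]
      exact Finset.mem_erase.mpr ⟨by simp [Fin.ext_iff, hj], Finset.mem_univ _⟩
    obtain ⟨e, heB, he2⟩ := Finset.mem_image.mp hjmem
    exact ⟨e, ⟨heB, he2⟩, fun e' ⟨he'B, he'2⟩ => hinj e' he'B e heB (he'2.trans he2.symm)⟩
  · rintro huniq ⟨v, w, hcyc, e, hew, hmin, hB⟩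
    -- the maximal vertex of the cycle
    have hvs : v ∈ w.support := w.start_mem_support
    set M : Fin n := w.support.toFinset.max' ⟨v, List.mem_toFinset.mpr hvs⟩ with hM
    have hM_mem : M ∈ w.support := List.mem_toFinset.mp (w.support.toFinset.max'_mem _)
    have hM_le : ∀ z ∈ w.support, z ≤ M := fun z hz =>
      w.support.toFinset.le_max' z (List.mem_toFinset.mpr hz)
    obtain ⟨x, y, hxy, hxe, hye⟩ := exists_two_edges hcyc hM_mem
    -- the minimal edge cannot contain the maximal vertex
    have hclaim : ∀ z : Fin n, s(M, z) ∈ w.edges → e ≠ s(M, z) := by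
      intro z hz he
      have hMz : M ≠ z := (Walk.adj_of_mem_edges w hz).ne
      have hzsup : z ∈ w.support := w.snd_mem_support_of_mem_edges hz
      have hzM : z < M := lt_of_le_of_ne (hM_le z hzsup) (Ne.symm hMz)
      have hpe : edgePair e = (z, M) := by rw [he, edgePair_mk' hzM]
      obtain ⟨p, q, hpq, hpe', hqe'⟩ := exists_two_edges hcyc hzsup
      have hr : ∃ r, r ≠ M ∧ s(z, r) ∈ w.edges := by
        rcases eq_or_ne p M with rfl | h
        · exact ⟨q, fun h => hpq h.symm, hqe'⟩
        · exact ⟨p, h, hpe'⟩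
      obtain ⟨r, hrM, hre⟩ := hr
      have hzr : z ≠ r := (Walk.adj_of_mem_edges w hre).ne
      have hge : s(z, r) ≠ e := by
        rw [he]
        intro hh
        rcases Sym2.eq_iff.mp hh with ⟨h1, h2⟩ | ⟨h1, h2⟩
        · exact hMz h1.symm
        · exact hrM h2
      have hlex := hmin _ hre hge
      rw [hpe] at hlex
      have hrsup : r ∈ w.support := w.snd_mem_support_of_mem_edges hre
      have hrleM : r ≤ M := hM_le r hrsup
      rcases lt_or_gt_of_ne hzr with h | h
      · rw [edgePair_mk h] at hlex
        simp only [lexLt] at hlex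
        rcases hlex with h' | ⟨_, h2⟩
        · exact lt_irrefl z h'
        · exact absurd h2 (not_lt.mpr hrleM)
      · rw [edgePair_mk' h] at hlex
        simp only [lexLt] at hlex
        rcases hlex with h' | ⟨h1, _⟩
        · exact lt_irrefl z (h'.trans h)
        · exact hzr h1
    -- now both edges at M are in B, contradicting uniqueness
    have hxM : x < M := lt_of_le_of_ne
      (hM_le x (w.snd_mem_support_of_mem_edges hxe))
      (Ne.symm (Walk.adj_of_mem_edges w hxe).ne)
    have hyM : y < M := lt_of_le_of_ne
      (hM_le y (w.snd_mem_support_of_mem_edges hye))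
      (Ne.symm (Walk.adj_of_mem_edges w hye).ne)
    have hxB : (x, M) ∈ B := by
      have := hB _ hxe (Ne.symm (hclaim x hxe))
      rwa [edgePair_mk' hxM] at this
    have hyB : (y, M) ∈ B := by
      have := hB _ hye (Ne.symm (hclaim y hye))
      rwa [edgePair_mk' hyM] at this
    have hM0 : M.val ≠ 0 := by
      have := hxM
      rw [Fin.lt_def] at this
      omega
    obtain ⟨e₀, _, hu⟩ := huniq M hM0
    have h1 : (x, M) = e₀ := hu _ ⟨hxB, rfl⟩
    have h2 : (y, M) = e₀ := hu _ ⟨hyB, rfl⟩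
    rw [← h2] at h1
    exact hxy (congrArg Prod.fst h1)
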